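/- Let G be a Tanner graph whose code C(G) contains a nonzero codeword, and let d_min be the minimum Hamming weight of a nonzero codeword of C(G). If p ∈ R_{≥0}^n is a nonzero good pseudocodeword, then w_maxfrac(p) ≥ d_min; consequently w_BSC(p) ≥ d_min and w_AWGN(p) ≥ d_min. -/

import Mathlib

/-- A Tanner graph with `n` variable nodes and `m` check nodes, given by the
neighborhood `N u` (the set of variable nodes adjacent to check node `u`). -/
structure TannerGraph (n m : ℕ) where
  N : Fin m → Finset (Fin n)

/-- A codeword of the binary code `C(G)`: every check node has an even number of
neighbors assigned 1. -/
def IsCodeword {n m : ℕ} (G : TannerGraph n m) (c : Fin n → ZMod 2) : Prop :=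
  ∀ j : Fin m, ∑ i ∈ G.N j, c i = 0

/-- A vector `p` is a bad pseudocodeword if some weight vector makes its cost
negative while all codewords (as 0/1 real vectors) have nonnegative cost. -/
def IsBad {n m : ℕ} (G : TannerGraph n m) (p : Fin n → ℝ) : Prop :=
  ∃ w : Fin n → ℝ, (∑ i, p i * w i) < 0 ∧
    ∀ c : Fin n → ZMod 2, IsCodeword G c → 0 ≤ ∑ i, ((c i).val : ℝ) * w i

/-- AWGN pseudocodeword weight. -/
noncomputable def wAWGN {n : ℕ} (p : Fin n → ℝ) : ℝ :=
  (∑ i, p i) ^ 2 / (∑ i, (p i) ^ 2)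

/-- The sum of the `e` largest components of `p` (for nonnegative `p`). -/
noncomputable def maxSum {n : ℕ} (p : Fin n → ℝ) (e : ℕ) : ℝ :=
  sSup ((fun S : Finset (Fin n) => ∑ i ∈ S, p i) '' {S | S.card = e})

/-- The smallest number `e` such that the sum of the `e` largest components of `p`
is at least half of the total sum. -/
noncomputable def eBSC {n : ℕ} (p : Fin n → ℝ) : ℕ :=
  sInf {e : ℕ | (∑ i, p i) / 2 ≤ maxSum p e}

/-- BSC pseudocodeword weight. -/
noncomputable def wBSC {n : ℕ} (p : Fin n → ℝ) : ℝ :=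
  if maxSum p (eBSC p) = (∑ i, p i) / 2 then 2 * (eBSC p : ℝ) else 2 * (eBSC p : ℝ) - 1

/-- Max-fractional weight: total sum divided by the largest component. -/
noncomputable def wMaxFrac {n : ℕ} (p : Fin n → ℝ) : ℝ :=
  (∑ i, p i) / sSup (Set.range p)

/-- Hamming weight of a binary vector. -/
def hammingWt {n : ℕ} (c : Fin n → ZMod 2) : ℕ :=
  (Finset.univ.filter (fun i => c i ≠ 0)).card

lemma zmodVal_le_one (x : ZMod 2) : ((x.val : ℝ)) ≤ 1 := by
  have h := ZMod.val_lt x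
  have h2 : x.val ≤ 1 := by omega
  exact_mod_cast h2

lemma sumVal {n : ℕ} (c : Fin n → ZMod 2) :
    ∑ i, ((c i).val : ℝ) = (hammingWt c : ℝ) := by
  rw [hammingWt, Finset.card_filter]
  push_cast
  refine Finset.sum_congr rfl fun i _ => ?_
  by_cases h : c i = 0
  · simp [h]
  · have h1 := ZMod.val_lt (c i)
    have h2 : (c i).val ≠ 0 := by simpa [ZMod.val_eq_zero] using h
    have hv : (c i).val = 1 := by omega
    simp [h, hv]

theorem good_pscw_weight_ge_dmin {n m : ℕ} (G : TannerGraph n m) (dmin : ℕ)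
    (hdmin : IsLeast {k : ℕ | ∃ c : Fin n → ZMod 2,
      IsCodeword G c ∧ c ≠ 0 ∧ hammingWt c = k} dmin)
    (p : Fin n → ℝ) (hp0 : ∀ i, 0 ≤ p i) (hpne : p ≠ 0)
    (hgood : ¬ IsBad G p) :
    (dmin : ℝ) ≤ wMaxFrac p ∧ (dmin : ℝ) ≤ wBSC p ∧ (dmin : ℝ) ≤ wAWGN p := by
  classical
  obtain ⟨i0, hi0⟩ : ∃ i, p i ≠ 0 := by
    by_contra h; push_neg at h; exact hpne (funext h)
  have hi0' : 0 < p i0 := lt_of_le_of_ne (hp0 i0) (Ne.symm hi0)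
  have hs : 0 < ∑ i, p i :=
    Finset.sum_pos' (fun i _ => hp0 i) ⟨i0, Finset.mem_univ _, hi0'⟩
  obtain ⟨imax, -, hmaxm⟩ :=
    Finset.exists_max_image Finset.univ p ⟨i0, Finset.mem_univ i0⟩
  have hmax' : ∀ i, p i ≤ p imax := fun i => hmaxm i (Finset.mem_univ i)
  have hM : sSup (Set.range p) = p imax :=
    IsGreatest.csSup_eq ⟨⟨imax, rfl⟩, by rintro x ⟨i, rfl⟩; exact hmax' i⟩
  have hMpos : 0 < p imax := lt_of_lt_of_le hi0' (hmax' i0)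
  have hgood' : ∀ w : Fin n → ℝ,
      (∀ c : Fin n → ZMod 2, IsCodeword G c → 0 ≤ ∑ i, ((c i).val : ℝ) * w i) →
      0 ≤ ∑ i, p i * w i := by
    intro w hw
    by_contra h
    exact hgood ⟨w, lt_of_not_ge h, hw⟩
  have hwt : ∀ c : Fin n → ZMod 2, IsCodeword G c → c ≠ 0 →
      (dmin : ℝ) ≤ ∑ i, ((c i).val : ℝ) := by
    intro c hc hcne
    rw [sumVal]
    exact_mod_cast hdmin.2 ⟨c, hc, hcne, rfl⟩
  -- Max-fractional bound
  have hkey : (dmin : ℝ) * p imax ≤ ∑ i, p i := by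
    have hid : ∀ f : Fin n → ℝ,
        ∑ i, f i * (if i = imax then 1 - (dmin : ℝ) else 1)
          = (∑ i, f i) - (dmin : ℝ) * f imax := by
      intro f
      have hpt : ∀ i ∈ Finset.univ,
          f i * (if i = imax then 1 - (dmin : ℝ) else 1)
            = f i - (dmin : ℝ) * (if i = imax then f i else 0) := by
        intro i _
        by_cases h1 : i = imax
        · simp only [if_pos h1]; ring
        · simp only [if_neg h1]; ring
      rw [Finset.sum_congr rfl hpt, Finset.sum_sub_distrib, ← Finset.mul_sum,
        Finset.sum_ite_eq' Finset.univ imax f]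
      simp
    have h0 := hgood' (fun i => if i = imax then 1 - (dmin : ℝ) else 1) ?_
    · rw [hid p] at h0; linarith
    · intro c hc
      rw [hid fun i => ((c i).val : ℝ)]
      by_cases hcz : c = 0
      · subst hcz; simp
      · have h1 := hwt c hc hcz
        have h2 : (dmin : ℝ) * ((c imax).val : ℝ) ≤ (dmin : ℝ) * 1 :=
          mul_le_mul_of_nonneg_left (zmodVal_le_one _) (Nat.cast_nonneg _)
        linarith
  have hMF : (dmin : ℝ) ≤ wMaxFrac p := by
    rw [wMaxFrac, hM, le_div_iff₀ hMpos]
    exact hkey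
  -- AWGN bound
  have hsq_pos : 0 < ∑ i, (p i) ^ 2 :=
    Finset.sum_pos' (fun i _ => sq_nonneg _) ⟨i0, Finset.mem_univ _, by positivity⟩
  have hsq_le : ∑ i, (p i) ^ 2 ≤ p imax * ∑ i, p i := by
    rw [Finset.mul_sum]
    refine Finset.sum_le_sum fun i _ => ?_
    have h1 := hmax' i; have h2 := hp0 i
    nlinarith
  have hAW : (dmin : ℝ) ≤ wAWGN p := by
    rw [wAWGN, le_div_iff₀ hsq_pos]
    calc (dmin : ℝ) * ∑ i, (p i) ^ 2
        ≤ (dmin : ℝ) * (p imax * ∑ i, p i) :=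
          mul_le_mul_of_nonneg_left hsq_le (Nat.cast_nonneg _)
      _ = ((dmin : ℝ) * p imax) * ∑ i, p i := by ring
      _ ≤ (∑ i, p i) * ∑ i, p i := mul_le_mul_of_nonneg_right hkey hs.le
      _ = (∑ i, p i) ^ 2 := by ring
  -- BSC bound
  have hmaxn : maxSum p n = ∑ i, p i := by
    have hset : {S : Finset (Fin n) | S.card = n} = {Finset.univ} := by
      ext S
      simp only [Set.mem_setOf_eq, Set.mem_singleton_iff]
      rw [← Finset.card_eq_iff_eq_univ]
      simp
    rw [maxSum, hset, Set.image_singleton, csSup_singleton]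
  have hn_mem : n ∈ {e : ℕ | (∑ i, p i) / 2 ≤ maxSum p e} := by
    simp only [Set.mem_setOf_eq, hmaxn]; linarith
  have he_mem : (∑ i, p i) / 2 ≤ maxSum p (eBSC p) := Nat.sInf_mem ⟨n, hn_mem⟩
  have he_le : eBSC p ≤ n := Nat.sInf_le hn_mem
  obtain ⟨S, hScard, hSsum⟩ :
      ∃ S : Finset (Fin n), S.card = eBSC p ∧ ∑ i ∈ S, p i = maxSum p (eBSC p) := by
    have hne : ((fun S : Finset (Fin n) => ∑ i ∈ S, p i) ''
        {S | S.card = eBSC p}).Nonempty := by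
      obtain ⟨S, -, hS⟩ := Finset.exists_subset_card_eq (s := (Finset.univ : Finset (Fin n)))
        (n := eBSC p) (by simpa using he_le)
      exact ⟨_, ⟨S, hS, rfl⟩⟩
    obtain ⟨S, hS, hsum⟩ := hne.csSup_mem (Set.toFinite _)
    exact ⟨S, hS, hsum⟩
  have hvalS : ∀ c : Fin n → ZMod 2, ∑ i ∈ S, ((c i).val : ℝ) ≤ (eBSC p : ℝ) := by
    intro c
    calc ∑ i ∈ S, ((c i).val : ℝ) ≤ ∑ _i ∈ S, (1 : ℝ) :=
          Finset.sum_le_sum fun i _ => zmodVal_le_one _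
      _ = (eBSC p : ℝ) := by rw [Finset.sum_const, hScard]; simp
  have hBSC : (dmin : ℝ) ≤ wBSC p := by
    rw [wBSC]
    split_ifs with hcase
    · -- equality case
      by_contra hlt
      push_neg at hlt
      have hd2 : 2 * eBSC p < dmin := by exact_mod_cast hlt
      have hcomp : 0 < ∑ i ∈ Sᶜ, p i := by
        have hsplit : ∑ i ∈ S, p i + ∑ i ∈ Sᶜ, p i = ∑ i, p i :=
          Finset.sum_add_sum_compl S p
        rw [hSsum, hcase] at hsplit
        linarith
      obtain ⟨j, hjS, hjpos⟩ : ∃ j ∈ Sᶜ, 0 < p j := by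
        by_contra h
        push_neg at h
        have := Finset.sum_nonpos h
        linarith
      have hjS' : j ∉ S := Finset.mem_compl.mp hjS
      have hid : ∀ f : Fin n → ℝ,
          ∑ i, f i * (if i ∈ S then (-1 : ℝ) else if i = j then 0 else 1)
            = (∑ i, f i) - 2 * ∑ i ∈ S, f i - f j := by
        intro f
        have hpt : ∀ i ∈ Finset.univ,
            f i * (if i ∈ S then (-1 : ℝ) else if i = j then 0 else 1)
              = f i - 2 * (if i ∈ S then f i else 0) - (if i = j then f i else 0) := by
          intro i _
          by_cases h1 : i ∈ S
          · have hij : i ≠ j := by rintro rfl; exact hjS' h1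
            simp only [if_pos h1, if_neg hij]; ring
          · by_cases h2 : i = j
            · simp only [if_neg h1, if_pos h2]; ring
            · simp only [if_neg h1, if_neg h2]; ring
        rw [Finset.sum_congr rfl hpt, Finset.sum_sub_distrib, Finset.sum_sub_distrib,
          ← Finset.mul_sum, Finset.sum_ite_mem, Finset.univ_inter,
          Finset.sum_ite_eq' Finset.univ j f]
        simp
      have h0 := hgood' (fun i => if i ∈ S then (-1 : ℝ) else if i = j then 0 else 1) ?_
      · rw [hid p, hSsum, hcase] at h0
        linarith
      · intro c hc
        rw [hid fun i => ((c i).val : ℝ)]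
        by_cases hcz : c = 0
        · subst hcz; simp
        · have h1 := hwt c hc hcz
          have h2 := hvalS c
          have h3 : ((c j).val : ℝ) ≤ 1 := zmodVal_le_one _
          have hd2' : 2 * (eBSC p : ℝ) + 1 ≤ (dmin : ℝ) := by exact_mod_cast hd2
          linarith
    · -- strict case
      have hstrict : (∑ i, p i) / 2 < maxSum p (eBSC p) :=
        lt_of_le_of_ne he_mem (Ne.symm hcase)
      by_contra hlt
      push_neg at hlt
      have hd2 : 2 * eBSC p ≤ dmin := by
        have h1 : ((2 * eBSC p : ℕ) : ℝ) < ((dmin + 1 : ℕ) : ℝ) := by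
          push_cast; linarith
        have h2 : 2 * eBSC p < dmin + 1 := by exact_mod_cast h1
        omega
      have hid : ∀ f : Fin n → ℝ,
          ∑ i, f i * (if i ∈ S then (-1 : ℝ) else 1)
            = (∑ i, f i) - 2 * ∑ i ∈ S, f i := by
        intro f
        have hpt : ∀ i ∈ Finset.univ,
            f i * (if i ∈ S then (-1 : ℝ) else 1)
              = f i - 2 * (if i ∈ S then f i else 0) := by
          intro i _
          by_cases h1 : i ∈ S
          · simp only [if_pos h1]; ring
          · simp only [if_neg h1]; ring
        rw [Finset.sum_congr rfl hpt, Finset.sum_sub_distrib, ← Finset.mul_sum,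
          Finset.sum_ite_mem, Finset.univ_inter]
      have h0 := hgood' (fun i => if i ∈ S then (-1 : ℝ) else 1) ?_
      · rw [hid p, hSsum] at h0
        linarith
      · intro c hc
        rw [hid fun i => ((c i).val : ℝ)]
        by_cases hcz : c = 0
        · subst hcz; simp
        · have h1 := hwt c hc hcz
          have h2 := hvalS c
          have hd2' : 2 * (eBSC p : ℝ) ≤ (dmin : ℝ) := by exact_mod_cast hd2
          linarith
  exact ⟨hMF, hBSC, hAW⟩
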